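/- Let f : X → ℝ be Hölder continuous admitting a unique maximizing measure, let V be a calibrated subaction for f, and set R_− = f + V − V∘σ − β(f). For each c > 0 let g_c : X → ℝ be continuous with ∫_M e^{g_c(ax)} dm(a) = 1 for all x ∈ X, and assume sup_{x∈X} |g_c(x) − c R_−(x)| / c → 0 as c → ∞. Then for every x ∈ X and every closed set F ⊆ X, limsup_{c,n→∞} (1/c) log (L_{g_c}^n χ_F)(x) ≤ sup_{z∈F} R_−^∞(z) = −inf_{z∈F} R_+^∞(z), with the conventions log 0 = −∞ and sup over the empty set = −∞. -/

import Mathlib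

open MeasureTheory Filter Topology Set ENNReal

noncomputable section

namespace GXY

variable {M : Type*}

/-- The shift map on the sequence space `ℕ → M`. -/
def shift (x : ℕ → M) : ℕ → M := fun n => x (n + 1)

/-- Prepending a symbol `a` to a sequence `x`. -/
def cons (a : M) (x : ℕ → M) : ℕ → M := fun n => Nat.casesOn n a x

/-- The metric `d(x,y) = ∑ θ^n d_M(x_n, y_n)` on `ℕ → M`. -/
def D [MetricSpace M] (θ : ℝ) (x y : ℕ → M) : ℝ := ∑' n, θ ^ n * dist (x n) (y n)

/-- Hölder continuity with respect to the metric `D θ`. -/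
def IsHolder [MetricSpace M] (θ : ℝ) (f : (ℕ → M) → ℝ) : Prop :=
  ∃ C > (0 : ℝ), ∃ α ∈ Set.Ioc (0 : ℝ) 1, ∀ x y, |f x - f y| ≤ C * (D θ x y) ^ α

/-- Shift-invariant Borel probability measures on `ℕ → M`. -/
def IsInvProb [MetricSpace M] [MeasurableSpace M] (μ : Measure (ℕ → M)) : Prop :=
  IsProbabilityMeasure μ ∧ μ.map shift = μ

/-- The maximal ergodic average `β(f)`. -/
def betaF [MetricSpace M] [MeasurableSpace M] (f : (ℕ → M) → ℝ) : ℝ :=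
  sSup { r | ∃ μ : Measure (ℕ → M), IsInvProb μ ∧ r = ∫ x, f x ∂μ }

/-- A maximizing measure for `f`. -/
def IsMaximizing [MetricSpace M] [MeasurableSpace M] (f : (ℕ → M) → ℝ)
    (μ : Measure (ℕ → M)) : Prop :=
  IsInvProb μ ∧ ∫ x, f x ∂μ = betaF f

/-- A calibrated subaction `V` for `f`:
`V y = max_{σ x = y} (f x + V x - β f)` for every `y`. -/
def IsCalibrated [MetricSpace M] [MeasurableSpace M] (f V : (ℕ → M) → ℝ) : Prop :=
  Continuous V ∧
    ∀ y, IsGreatest { t | ∃ x, shift x = y ∧ t = f x + V x - betaF f } (V y)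

/-- The Ruelle transfer operator `(L_g w)(x) = ∫_M e^{g(ax)} w(ax) dm(a)`. -/
def Ruelle [MetricSpace M] [MeasurableSpace M] (m : Measure M) (g w : (ℕ → M) → ℝ) :
    (ℕ → M) → ℝ :=
  fun x => ∫ a, Real.exp (g (cons a x)) * w (cons a x) ∂m

/-- `R₊ = β(f) + V ∘ σ - V - f ≥ 0`. -/
def Rplus [MetricSpace M] [MeasurableSpace M] (f V : (ℕ → M) → ℝ) (x : ℕ → M) : ℝ :=
  betaF f + V (shift x) - V x - f x

/-- `R₊^∞(z) = ∑_{j≥0} R₊(σ^j z) ∈ [0,∞]`. -/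
def RplusInf [MetricSpace M] [MeasurableSpace M] (f V : (ℕ → M) → ℝ) (z : ℕ → M) : ℝ≥0∞ :=
  ∑' j : ℕ, ENNReal.ofReal (Rplus f V (shift^[j] z))

/-- `R₋ = f + V - V ∘ σ - β(f) ≤ 0`. -/
def Rminus [MetricSpace M] [MeasurableSpace M] (f V : (ℕ → M) → ℝ) (x : ℕ → M) : ℝ :=
  f x + V x - V (shift x) - betaF f

/-- The Birkhoff sum `R₋^k = ∑_{j<k} R₋ ∘ σ^j`. -/
def RminusBirk [MetricSpace M] [MeasurableSpace M] (f V : (ℕ → M) → ℝ) (k : ℕ)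
    (z : ℕ → M) : ℝ :=
  ∑ j ∈ Finset.range k, Rminus f V (shift^[j] z)

/-- Extended-real logarithm with the convention `log 0 = -∞`. -/
def elog (t : ℝ) : EReal := if t = 0 then ⊥ else ((Real.log t : ℝ) : EReal)

/-! ### Auxiliary lemmas -/

lemma shift_cons (a : M) (x : ℕ → M) : shift (cons a x) = x := rfl

lemma continuous_shift [TopologicalSpace M] : Continuous (shift : (ℕ → M) → ℕ → M) :=
  continuous_pi fun n => continuous_apply (n + 1)

lemma continuous_cons [TopologicalSpace M] (x : ℕ → M) :
    Continuous (fun a : M => cons a x) := by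
  refine continuous_pi fun n => ?_
  cases n with
  | zero => exact continuous_id
  | succ n => exact continuous_const

lemma continuous_shift_iter [TopologicalSpace M] (k : ℕ) :
    Continuous (fun z : ℕ → M => shift^[k] z) := by
  induction k with
  | zero => exact continuous_id
  | succ k ih => rw [Function.iterate_succ']; exact continuous_shift.comp ih

lemma D_tendsto [MetricSpace M] (hdiam : ∀ a b : M, dist a b ≤ 1) {θ : ℝ}
    (hθ : θ ∈ Set.Ioo (0:ℝ) 1) (x : ℕ → M) :
    Tendsto (fun y => D θ x y) (𝓝 x) (𝓝 0) := by
  have hθ0 : (0:ℝ) ≤ θ := hθ.1.le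
  have hgeo : Summable (fun n : ℕ => θ ^ n) := summable_geometric_of_lt_one hθ0 hθ.2
  have hsum : ∀ y : ℕ → M, Summable (fun n => θ ^ n * dist (x n) (y n)) := by
    intro y
    refine Summable.of_nonneg_of_le (fun n => by positivity) (fun n => ?_) hgeo
    calc θ ^ n * dist (x n) (y n) ≤ θ ^ n * 1 :=
          mul_le_mul_of_nonneg_left (hdiam _ _) (by positivity)
      _ = θ ^ n := mul_one _
  have hDnonneg : ∀ y, 0 ≤ D θ x y := fun y => tsum_nonneg (fun n => by positivity)
  have hD_le : ∀ (y : ℕ → M) (N : ℕ),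
      D θ x y ≤ (∑ n ∈ Finset.range N, θ ^ n * dist (x n) (y n)) + θ ^ N * (1 - θ)⁻¹ := by
    intro y N
    have hsplit := (Summable.sum_add_tsum_nat_add (f := fun n => θ ^ n * dist (x n) (y n)) N (hsum y))
    rw [D, ← hsplit]
    refine add_le_add_right ?_ _
    have h1 : ∑' n : ℕ, θ ^ (n + N) * dist (x (n + N)) (y (n + N)) ≤ ∑' n : ℕ, θ ^ N * θ ^ n := by
      refine Summable.tsum_le_tsum (fun n => ?_) ((hsum y).comp_injective (add_left_injective N))
        (hgeo.mul_left _)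
      calc θ ^ (n + N) * dist (x (n+N)) (y (n+N)) ≤ θ ^ (n + N) * 1 :=
            mul_le_mul_of_nonneg_left (hdiam _ _) (by positivity)
        _ = θ ^ N * θ ^ n := by rw [mul_one, pow_add, mul_comm]
    calc ∑' n : ℕ, θ ^ (n + N) * dist (x (n + N)) (y (n + N)) ≤ ∑' n : ℕ, θ ^ N * θ ^ n := h1
      _ = θ ^ N * (1 - θ)⁻¹ := by rw [tsum_mul_left, tsum_geometric_of_lt_one hθ0 hθ.2]
  rw [Metric.tendsto_nhds]
  intro ε hε
  obtain ⟨N, hN⟩ : ∃ N : ℕ, θ ^ N * (1 - θ)⁻¹ < ε / 2 := by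
    have : Tendsto (fun N : ℕ => θ ^ N * (1 - θ)⁻¹) atTop (𝓝 (0 * (1 - θ)⁻¹)) :=
      (tendsto_pow_atTop_nhds_zero_of_lt_one hθ0 hθ.2).mul_const _
    rw [zero_mul] at this
    exact ((this.eventually (eventually_lt_nhds (by positivity : (0:ℝ) < ε/2))).exists)
  have hcont : Tendsto (fun y : ℕ → M => ∑ n ∈ Finset.range N, θ ^ n * dist (x n) (y n))
      (𝓝 x) (𝓝 0) := by
    have : Continuous (fun y : ℕ → M => ∑ n ∈ Finset.range N, θ ^ n * dist (x n) (y n)) := by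
      refine continuous_finset_sum _ (fun n _ => ?_)
      exact continuous_const.mul (continuous_const.dist (continuous_apply n))
    have h0 : (∑ n ∈ Finset.range N, θ ^ n * dist (x n) (x n)) = 0 := by simp
    simpa [h0] using this.tendsto x
  filter_upwards [hcont.eventually (eventually_lt_nhds (by positivity : (0:ℝ) < ε/2))] with y hy
  rw [Real.dist_eq, sub_zero, abs_of_nonneg (hDnonneg y)]
  calc D θ x y ≤ _ := hD_le y N
    _ < ε / 2 + ε / 2 := add_lt_add_of_lt_of_le hy hN.le
    _ = ε := by ring

lemma continuous_of_isHolder [MetricSpace M] (hdiam : ∀ a b : M, dist a b ≤ 1) {θ : ℝ}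
    (hθ : θ ∈ Set.Ioo (0:ℝ) 1) {f : (ℕ → M) → ℝ} (hf : IsHolder θ f) : Continuous f := by
  obtain ⟨C, hC, α, hα, hbound⟩ := hf
  rw [continuous_iff_continuousAt]
  intro x
  have hD := D_tendsto hdiam hθ x
  have hpow : Tendsto (fun y => C * (D θ x y) ^ α) (𝓝 x) (𝓝 0) := by
    have h1 : ContinuousAt (fun t : ℝ => t ^ α) 0 :=
      Real.continuousAt_rpow_const 0 α (Or.inr hα.1.le)
    have h2 : Tendsto (fun y => (D θ x y) ^ α) (𝓝 x) (𝓝 ((0:ℝ) ^ α)) := h1.tendsto.comp hD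
    rw [Real.zero_rpow (ne_of_gt hα.1)] at h2
    simpa using h2.const_mul C
  have habs : Tendsto (fun y => |f y - f x|) (𝓝 x) (𝓝 0) := by
    refine squeeze_zero (fun y => abs_nonneg _) (fun y => ?_) hpow
    calc |f y - f x| = |f x - f y| := abs_sub_comm _ _
      _ ≤ C * (D θ x y) ^ α := hbound x y
  have h3 : Tendsto (fun y => f y - f x) (𝓝 x) (𝓝 0) :=
    tendsto_zero_iff_abs_tendsto_zero _ |>.mpr habs
  simpa [ContinuousAt] using h3.add_const (f x)

lemma Rplus_eq_neg_Rminus [MetricSpace M] [MeasurableSpace M] (f V : (ℕ → M) → ℝ)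
    (w : ℕ → M) : Rplus f V w = -Rminus f V w := by
  simp only [Rplus, Rminus]; ring

lemma Rminus_nonpos [MetricSpace M] [MeasurableSpace M] {f V : (ℕ → M) → ℝ}
    (hV : IsCalibrated f V) (x : ℕ → M) : Rminus f V x ≤ 0 := by
  have h := (hV.2 (shift x)).2 ⟨x, rfl, rfl⟩
  simp only [Rminus]
  linarith

section Measure

variable [MetricSpace M] [CompactSpace M] [MeasurableSpace M] [BorelSpace M]
  (m : Measure M) [IsProbabilityMeasure m]

lemma integrable_comp_cons {φ : (ℕ → M) → ℝ} (hφ : Continuous φ) (x : ℕ → M) :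
    Integrable (fun a => φ (cons a x)) m := by
  have hc : Continuous fun a => φ (cons a x) := hφ.comp (continuous_cons x)
  exact hc.integrable_of_hasCompactSupport (isClosed_tsupport _).isCompact

/-- Markov contraction: the iterates stay within pointwise constant bounds. -/
lemma iter_bounds {h : (ℕ → M) → ℝ} (hh : Continuous h)
    (hn : ∀ x, (∫ a, Real.exp (h (cons a x)) ∂m) = 1)
    {w : (ℕ → M) → ℝ} {Bd : ℝ} (hw0 : ∀ y, 0 ≤ w y) (hwB : ∀ y, w y ≤ Bd) :
    ∀ n x, 0 ≤ (Ruelle m h)^[n] w x ∧ (Ruelle m h)^[n] w x ≤ Bd := by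
  intro n
  induction n with
  | zero => intro x; exact ⟨hw0 x, hwB x⟩
  | succ n ih =>
    intro x
    rw [Function.iterate_succ_apply']
    constructor
    · exact integral_nonneg fun a => mul_nonneg (Real.exp_pos _).le (ih _).1
    · have hInt : Integrable (fun a => Bd * Real.exp (h (cons a x))) m :=
        (integrable_comp_cons m (Real.continuous_exp.comp hh) x).const_mul Bd
      calc (Ruelle m h) ((Ruelle m h)^[n] w) x
          ≤ ∫ a, Bd * Real.exp (h (cons a x)) ∂m := by
            refine integral_mono_of_nonneg (Eventually.of_forall fun a =>
              mul_nonneg (Real.exp_pos _).le (ih _).1) hInt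
              (Eventually.of_forall fun a => ?_)
            calc Real.exp (h (cons a x)) * (Ruelle m h)^[n] w (cons a x)
                ≤ Real.exp (h (cons a x)) * Bd :=
                  mul_le_mul_of_nonneg_left (ih _).2 (Real.exp_pos _).le
              _ = Bd * Real.exp (h (cons a x)) := mul_comm _ _
        _ = Bd * ∫ a, Real.exp (h (cons a x)) ∂m := integral_const_mul _ _
        _ = Bd := by rw [hn x, mul_one]

end Measure

section Main

variable [MetricSpace M] [CompactSpace M] [MeasurableSpace M] [BorelSpace M]
variable (f V : (ℕ → M) → ℝ) (F : Set (ℕ → M)) (c : ℝ)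

/-- The auxiliary set of values whose sup bounds the `k`-th Ruelle iterate at `x`. -/
def Sset (k : ℕ) (x : ℕ → M) : Set ℝ :=
  insert 0 ((fun y => Real.exp (c * RminusBirk f V k y)) '' {y | y ∈ F ∧ shift^[k] y = x})

variable {f V F c}

lemma Sset_le_one (hc : 0 ≤ c) (hRm : ∀ z, Rminus f V z ≤ 0) (k : ℕ) (x : ℕ → M) :
    ∀ t ∈ Sset f V F c k x, t ≤ 1 := by
  rintro t (rfl | ⟨y, hy, rfl⟩)
  · exact zero_le_one
  · have h1 : Real.exp (c * RminusBirk f V k y) ≤ Real.exp 0 :=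
      Real.exp_le_exp.mpr (mul_nonpos_of_nonneg_of_nonpos hc
        (Finset.sum_nonpos fun j _ => hRm _))
    simpa using h1

lemma Sset_bddAbove (hc : 0 ≤ c) (hRm : ∀ z, Rminus f V z ≤ 0) (k : ℕ) (x : ℕ → M) :
    BddAbove (Sset f V F c k x) := ⟨1, fun t ht => Sset_le_one hc hRm k x t ht⟩

lemma Sset_sSup_nonneg (hc : 0 ≤ c) (hRm : ∀ z, Rminus f V z ≤ 0) (k : ℕ) (x : ℕ → M) :
    0 ≤ sSup (Sset f V F c k x) :=
  le_csSup (Sset_bddAbove hc hRm k x) (mem_insert _ _)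

lemma main_induction {m : Measure M} [IsProbabilityMeasure m] {ε : ℝ}
    {h : (ℕ → M) → ℝ} (hh : Continuous h)
    (hn : ∀ x, (∫ a, Real.exp (h (cons a x)) ∂m) = 1)
    (hc : 0 < c)
    (hRm : ∀ z, Rminus f V z ≤ 0)
    (hg : ∀ z, h z ≤ c * Rminus f V z + c * ε) :
    ∀ (k : ℕ) (x : ℕ → M),
      (Ruelle m h)^[k] (F.indicator fun _ => 1) x
        ≤ Real.exp (c * (k * ε)) * sSup (Sset f V F c k x) := by
  have hc' : (0:ℝ) ≤ c := hc.le
  have hiter := iter_bounds m hh hn (w := F.indicator fun _ => 1) (Bd := 1)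
    (fun y => Set.indicator_nonneg (fun _ _ => zero_le_one) y)
    (fun y => Set.indicator_le_self' (fun _ _ => zero_le_one) y)
  intro k
  induction k with
  | zero =>
    intro x
    simp only [Function.iterate_zero, id_eq, Nat.cast_zero, zero_mul, mul_zero, Real.exp_zero,
      one_mul]
    by_cases hx : x ∈ F
    · rw [Set.indicator_of_mem hx]
      have hmem : (1:ℝ) ∈ Sset f V F c 0 x := by
        refine Set.mem_insert_iff.mpr (Or.inr ⟨x, ⟨hx, rfl⟩, ?_⟩)
        simp [RminusBirk]
      exact le_csSup (Sset_bddAbove hc' hRm 0 x) hmem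
    · rw [Set.indicator_of_notMem hx]
      exact Sset_sSup_nonneg hc' hRm 0 x
  | succ k ih =>
    intro x
    rw [Function.iterate_succ_apply']
    have key : ∀ a : M, Real.exp (c * Rminus f V (cons a x)) * sSup (Sset f V F c k (cons a x))
        ≤ sSup (Sset f V F c (k+1) x) := by
      intro a
      have hexp : (0:ℝ) < Real.exp (c * Rminus f V (cons a x)) := Real.exp_pos _
      rw [← le_div_iff₀' hexp]
      refine csSup_le ⟨0, mem_insert _ _⟩ ?_
      rintro t (rfl | ⟨y, ⟨hyF, hyk⟩, rfl⟩)
      · exact div_nonneg (Sset_sSup_nonneg hc' hRm _ x) hexp.le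
      · rw [le_div_iff₀' hexp]
        have hB : c * Rminus f V (cons a x) + c * RminusBirk f V k y
            = c * RminusBirk f V (k+1) y := by
          simp only [RminusBirk, Finset.sum_range_succ, hyk]; ring
        have hmem : Real.exp (c * RminusBirk f V (k+1) y) ∈ Sset f V F c (k+1) x := by
          refine Set.mem_insert_iff.mpr (Or.inr ⟨y, ⟨hyF, ?_⟩, rfl⟩)
          rw [Function.iterate_succ_apply', hyk]
          rfl
        calc Real.exp (c * Rminus f V (cons a x)) * Real.exp (c * RminusBirk f V k y)
            = Real.exp (c * RminusBirk f V (k+1) y) := by rw [← Real.exp_add, hB]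
          _ ≤ sSup (Sset f V F c (k+1) x) := le_csSup (Sset_bddAbove hc' hRm _ x) hmem
    set K : ℝ := Real.exp (c * (((k+1 : ℕ) : ℝ) * ε)) * sSup (Sset f V F c (k+1) x) with hK
    have hbound : ∀ a : M,
        Real.exp (h (cons a x)) * (Ruelle m h)^[k] (F.indicator fun _ => 1) (cons a x) ≤ K := by
      intro a
      calc Real.exp (h (cons a x)) * (Ruelle m h)^[k] (F.indicator fun _ => 1) (cons a x)
          ≤ Real.exp (c * Rminus f V (cons a x) + c * ε)
            * (Real.exp (c * (k * ε)) * sSup (Sset f V F c k (cons a x))) :=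
            mul_le_mul (Real.exp_le_exp.mpr (hg _)) (ih _) (hiter k _).1 (Real.exp_pos _).le
        _ = Real.exp (c * ε) * Real.exp (c * (k * ε))
            * (Real.exp (c * Rminus f V (cons a x)) * sSup (Sset f V F c k (cons a x))) := by
            rw [Real.exp_add]; ring
        _ ≤ Real.exp (c * ε) * Real.exp (c * (k * ε)) * sSup (Sset f V F c (k+1) x) :=
            mul_le_mul_of_nonneg_left (key a) (by positivity)
        _ = K := by
            rw [hK, ← Real.exp_add]
            congr 2
            push_cast
            ring
    calc (Ruelle m h) ((Ruelle m h)^[k] (F.indicator fun _ => 1)) x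
        ≤ ∫ _ : M, K ∂m :=
          integral_mono_of_nonneg (Eventually.of_forall fun a =>
            mul_nonneg (Real.exp_pos _).le (hiter k _).1) (integrable_const K)
            (Eventually.of_forall hbound)
      _ = K := by simp

end Main

lemma biSup_neg_eq_neg_biInf {X : Type*} (F : Set X) (v : X → EReal) :
    (⨆ z ∈ F, -(v z)) = -(⨅ z ∈ F, v z) := by
  refine le_antisymm (iSup₂_le fun z hz => EReal.neg_le_neg_iff.mpr (iInf₂_le z hz)) ?_
  rw [EReal.neg_le]
  exact le_iInf₂ fun z hz => EReal.neg_le_of_neg_le (le_iSup₂ (f := fun z _ => -(v z)) z hz)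

lemma coe_ennreal_biInf {X : Type*} (F : Set X) (u : X → ℝ≥0∞) :
    (((⨅ z ∈ F, u z : ℝ≥0∞)) : EReal) = ⨅ z ∈ F, (u z : EReal) := by
  rcases F.eq_empty_or_nonempty with rfl | ⟨z₀, hz₀⟩
  · simp
  refine le_antisymm (le_iInf₂ fun z hz =>
    EReal.coe_ennreal_le_coe_ennreal_iff.mpr (iInf₂_le z hz)) ?_
  by_contra hcon
  push_neg at hcon
  obtain ⟨b, hb1, hb2⟩ := exists_between hcon
  have hb0 : (0 : EReal) ≤ b := le_trans (EReal.coe_ennreal_nonneg _) hb1.le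
  have hbub : ∀ z ∈ F, b ≤ (u z : EReal) := fun z hz => hb2.le.trans (iInf₂_le z hz)
  induction b with
  | bot => exact absurd hb0 (by simp)
  | coe b₀ =>
    have hb₀0 : (0:ℝ) ≤ b₀ := by exact_mod_cast hb0
    have hle : ∀ z ∈ F, ENNReal.ofReal b₀ ≤ u z := by
      intro z hz
      rw [← EReal.coe_ennreal_le_coe_ennreal_iff, EReal.coe_ennreal_ofReal,
        max_eq_left hb₀0]
      exact hbub z hz
    have h1 : ENNReal.ofReal b₀ ≤ ⨅ z ∈ F, u z := le_iInf₂ hle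
    have h2 : (b₀ : EReal) ≤ ((⨅ z ∈ F, u z : ℝ≥0∞) : EReal) := by
      calc (b₀ : EReal) = ((ENNReal.ofReal b₀ : ℝ≥0∞) : EReal) := by
            rw [EReal.coe_ennreal_ofReal, max_eq_left hb₀0]
        _ ≤ _ := EReal.coe_ennreal_le_coe_ennreal_iff.mpr h1
    exact absurd (lt_of_le_of_lt h2 hb1) (lt_irrefl _)
  | top =>
    have htop : ∀ z ∈ F, u z = ⊤ := by
      intro z hz
      have h := hbub z hz
      rw [top_le_iff, EReal.coe_ennreal_eq_top_iff] at h
      exact h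
    have h : (⨅ z ∈ F, u z) = ⊤ :=
      le_antisymm le_top (le_iInf₂ fun z hz => (htop z hz).ge)
    rw [h] at hb1
    exact absurd hb1 (by simp)

lemma exists_good_k [MetricSpace M] [MeasurableSpace M] [CompactSpace M]
    (f V : (ℕ → M) → ℝ)
    (hRb : ∀ k : ℕ, Continuous (RminusBirk f V k))
    (hRm : ∀ z, Rminus f V z ≤ 0)
    {F : Set (ℕ → M)} (hF : IsClosed F) {r : ℝ}
    (hr : (⨆ z ∈ F, -(RplusInf f V z : EReal)) < (r : EReal)) :
    ∃ A : ℝ, A < r ∧ ∃ k : ℕ, ∀ y ∈ F, RminusBirk f V k y ≤ A := by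
  by_cases hr0 : 0 < r
  · refine ⟨0, hr0, 0, fun y _ => ?_⟩
    simp [RminusBirk]
  push_neg at hr0
  obtain ⟨r', hr'1, hr'2⟩ := EReal.exists_between_coe_real hr
  have hr'r : r' < r := by exact_mod_cast hr'2
  refine ⟨r', hr'r, ?_⟩
  by_contra hcon
  push_neg at hcon
  set G : ℕ → Set (ℕ → M) := fun k => F ∩ (RminusBirk f V k) ⁻¹' (Set.Ici r') with hG
  have hGc : ∀ k, IsClosed (G k) := fun k => hF.inter (isClosed_Ici.preimage (hRb k))
  have hGn : ∀ k, (G k).Nonempty := by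
    intro k
    obtain ⟨y, hyF, hy⟩ := hcon k
    exact ⟨y, hyF, le_of_lt hy⟩
  have hGd : ∀ k, G (k + 1) ⊆ G k := by
    intro k z hz
    refine ⟨hz.1, ?_⟩
    have h1 : RminusBirk f V (k+1) z ≤ RminusBirk f V k z := by
      rw [RminusBirk, Finset.sum_range_succ, ← RminusBirk]
      have := hRm (shift^[k] z)
      linarith
    exact le_trans hz.2 h1
  obtain ⟨z, hz⟩ := IsCompact.nonempty_iInter_of_sequence_nonempty_isCompact_isClosed
    G hGd hGn (hGc 0).isCompact hGc
  rw [Set.mem_iInter] at hz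
  have hzF : z ∈ F := (hz 0).1
  have hzb : ∀ k, r' ≤ RminusBirk f V k z := fun k => (hz k).2
  have hle : RplusInf f V z ≤ ENNReal.ofReal (-r') := by
    rw [RplusInf, ENNReal.tsum_eq_iSup_nat]
    refine iSup_le fun k => ?_
    have hnn : ∀ j ∈ Finset.range k, 0 ≤ Rplus f V (shift^[j] z) := by
      intro j _
      rw [Rplus_eq_neg_Rminus]
      linarith [hRm (shift^[j] z)]
    rw [← ENNReal.ofReal_sum_of_nonneg hnn]
    refine ENNReal.ofReal_le_ofReal ?_
    have hsum : ∑ j ∈ Finset.range k, Rplus f V (shift^[j] z) = -RminusBirk f V k z := by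
      rw [RminusBirk, ← Finset.sum_neg_distrib]
      exact Finset.sum_congr rfl fun j _ => Rplus_eq_neg_Rminus f V _
    rw [hsum]
    linarith [hzb k]
  have h1 : (r' : EReal) ≤ -(RplusInf f V z : EReal) := by
    have hneg : -((ENNReal.ofReal (-r') : ℝ≥0∞) : EReal) = (r' : EReal) := by
      rw [EReal.coe_ennreal_ofReal, max_eq_left (by linarith : (0:ℝ) ≤ -r')]
      norm_cast
      ring
    rw [← hneg]
    exact EReal.neg_le_neg_iff.mpr (EReal.coe_ennreal_le_coe_ennreal_iff.mpr hle)
  have h2 : -(RplusInf f V z : EReal) ≤ ⨆ w ∈ F, -(RplusInf f V w : EReal) :=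
    le_iSup₂ (f := fun w _ => -(RplusInf f V w : EReal)) z hzF
  exact absurd (lt_of_le_of_lt (h1.trans h2) hr'1) (lt_irrefl _)


theorem ldp_upper_bound_for_Ruelle_iterates
    [MetricSpace M] [CompactSpace M] [ConnectedSpace M] [MeasurableSpace M] [BorelSpace M]
    (hdiam : ∀ a b : M, dist a b ≤ 1)
    (θ : ℝ) (hθ : θ ∈ Set.Ioo (0 : ℝ) 1)
    (m : Measure M) [IsProbabilityMeasure m]
    (f V : (ℕ → M) → ℝ) (hf : IsHolder θ f)
    (huniq : ∃! μ : Measure (ℕ → M), IsMaximizing f μ)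
    (hV : IsCalibrated f V)
    (g : ℝ → (ℕ → M) → ℝ)
    (hgcont : ∀ c > (0 : ℝ), Continuous (g c))
    (hnorm : ∀ c > (0 : ℝ), ∀ x, Ruelle m (g c) (fun _ => 1) x = 1)
    (hconv : ∀ ε > (0 : ℝ), ∃ N : ℝ, ∀ c > N, ∀ x, |g c x - c * Rminus f V x| / c < ε)
    :
    ∀ x : ℕ → M, ∀ F : Set (ℕ → M), IsClosed F →
      (⨆ z ∈ F, -(RplusInf f V z : EReal))
          = -(((⨅ z ∈ F, RplusInf f V z) : ℝ≥0∞) : EReal) ∧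
      ∀ r : ℝ, (⨆ z ∈ F, -(RplusInf f V z : EReal)) < (r : EReal) →
        ∃ N : ℝ, ∀ c > N, ∀ n : ℕ, (n : ℝ) > N →
          ((1 / c : ℝ) : EReal) *
            elog ((Ruelle m (g c))^[n] (F.indicator fun _ => 1) x) < (r : EReal) := by
  intro x F hF
  constructor
  · rw [biSup_neg_eq_neg_biInf, coe_ennreal_biInf]
  intro r hr
  have hVc : Continuous V := hV.1
  have hfc : Continuous f := continuous_of_isHolder hdiam hθ hf
  have hRmc : Continuous (Rminus f V) := by
    unfold Rminus
    exact ((hfc.add hVc).sub (hVc.comp continuous_shift)).sub continuous_const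
  have hRb : ∀ k, Continuous (RminusBirk f V k) := by
    intro k
    unfold RminusBirk
    exact continuous_finset_sum _ fun j _ => hRmc.comp (continuous_shift_iter j)
  have hRm : ∀ z, Rminus f V z ≤ 0 := fun z => Rminus_nonpos hV z
  obtain ⟨A, hAr, k, hA⟩ := exists_good_k f V hRb hRm hF hr
  set ε : ℝ := (r - A) / (k + 1) with hε_def
  have hε : 0 < ε := div_pos (by linarith) (by positivity)
  have hkεA : A + k * ε < r := by
    have h1 : (k : ℝ) * ε = ((k:ℝ)/(k+1)) * (r - A) := by rw [hε_def]; ring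
    have h2 : ((k:ℝ)/(k+1)) < 1 := (div_lt_one (by positivity)).mpr (by linarith)
    have h3 : ((k:ℝ)/(k+1)) * (r - A) < 1 * (r - A) :=
      mul_lt_mul_of_pos_right h2 (by linarith)
    rw [h1]
    linarith
  obtain ⟨N₀, hN₀⟩ := hconv ε hε
  refine ⟨max (max N₀ (k:ℝ)) 0, ?_⟩
  intro c hc n hn
  have hc0 : (0:ℝ) < c := lt_of_le_of_lt (le_max_right _ _) hc
  have hcN₀ : N₀ < c := lt_of_le_of_lt ((le_max_left _ _).trans (le_max_left _ _)) hc
  have hkn : k ≤ n := by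
    have hkn' : (k:ℝ) < n := lt_of_le_of_lt ((le_max_right _ _).trans (le_max_left _ _)) hn
    exact_mod_cast hkn'.le
  have hg' : ∀ z, g c z ≤ c * Rminus f V z + c * ε := by
    intro z
    have h1 := hN₀ c hcN₀ z
    rw [div_lt_iff₀ hc0] at h1
    have h2 := (le_abs_self (g c z - c * Rminus f V z)).trans h1.le
    have h3 : ε * c = c * ε := mul_comm _ _
    linarith
  have hcont : Continuous (g c) := hgcont c hc0
  have hn1 : ∀ x', (∫ a, Real.exp (g c (cons a x')) ∂m) = 1 := by
    intro x'
    have hone := hnorm c hc0 x'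
    simpa [Ruelle] using hone
  have hiter0 := iter_bounds m hcont hn1 (w := F.indicator fun _ => 1) (Bd := 1)
    (fun y => Set.indicator_nonneg (fun _ _ => zero_le_one) y)
    (fun y => Set.indicator_le_self' (fun _ _ => zero_le_one) y)
  have hmain := main_induction (F := F) hcont hn1 hc0 hRm hg'
  have hsup : ∀ x' : ℕ → M, sSup (Sset f V F c k x') ≤ Real.exp (c * A) := by
    intro x'
    refine csSup_le ⟨0, mem_insert _ _⟩ ?_
    rintro t (rfl | ⟨y, ⟨hyF, _⟩, rfl⟩)
    · positivity
    · exact Real.exp_le_exp.mpr (mul_le_mul_of_nonneg_left (hA y hyF) hc0.le)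
  set Bd : ℝ := Real.exp (c * ((k:ℝ) * ε) + c * A) with hBd_def
  have hwB : ∀ y, (Ruelle m (g c))^[k] (F.indicator fun _ => 1) y ≤ Bd := by
    intro y
    calc (Ruelle m (g c))^[k] (F.indicator fun _ => 1) y
        ≤ Real.exp (c * ((k:ℝ) * ε)) * sSup (Sset f V F c k y) := hmain k y
      _ ≤ Real.exp (c * ((k:ℝ) * ε)) * Real.exp (c * A) :=
          mul_le_mul_of_nonneg_left (hsup y) (Real.exp_pos _).le
      _ = Bd := by rw [hBd_def, Real.exp_add]
  have hdec : (Ruelle m (g c))^[n] (F.indicator fun _ => 1) x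
      = (Ruelle m (g c))^[n - k] ((Ruelle m (g c))^[k] (F.indicator fun _ => 1)) x := by
    conv_lhs => rw [show n = (n - k) + k from (Nat.sub_add_cancel hkn).symm]
    rw [Function.iterate_add_apply]
  have hfin := iter_bounds m hcont hn1 (w := (Ruelle m (g c))^[k] (F.indicator fun _ => 1))
    (Bd := Bd) (fun y => (hiter0 k y).1) hwB (n - k) x
  rw [hdec]
  set t : ℝ := (Ruelle m (g c))^[n-k] ((Ruelle m (g c))^[k] (F.indicator fun _ => 1)) x with ht_def
  rcases eq_or_lt_of_le hfin.1 with h0 | hpos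
  · rw [elog, if_pos h0.symm, EReal.coe_mul_bot_of_pos (by positivity : (0:ℝ) < 1/c)]
    exact EReal.bot_lt_coe r
  · rw [elog, if_neg (ne_of_gt hpos), ← EReal.coe_mul, EReal.coe_lt_coe_iff]
    have hlog : Real.log t ≤ c * ((k:ℝ) * ε) + c * A := by
      rw [Real.log_le_iff_le_exp hpos]
      exact hfin.2
    have h5 : (1/c) * Real.log t ≤ (k:ℝ) * ε + A := by
      have h6 := mul_le_mul_of_nonneg_left hlog (by positivity : (0:ℝ) ≤ 1/c)
      calc (1/c) * Real.log t ≤ (1/c) * (c * ((k:ℝ)*ε) + c*A) := h6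
        _ = (k:ℝ)*ε + A := by field_simp
    linarith


end GXY
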